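/- Let X_1,…,X_n be independent real-valued random variables such that for every k ∈ {1,…,n}, a_k ≤ X_k ≤ b_k almost surely for constants a_k < b_k. Set p_k := (E[X_k] − a_k)/(b_k − a_k), assume 0 < p_k < 1 for every k, and define c_k := (1−2p_k)(b_k−a_k)²/(4·log((1−p_k)/p_k)) if p_k ≠ 1/2 and c_k := (b_k−a_k)²/8 if p_k = 1/2. Let μ_n := Σ_{k=1}^n E[X_k]. Then for every α ≥ 0: P(Σ_{k=1}^n X_k − μ_n ≤ −α·√n) ≤ exp(−α²·n/(4·Σ_{k=1}^n c_k)). -/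

import Mathlib

open Matrix MeasureTheory
open scoped ComplexOrder

noncomputable section

namespace QHT

variable {ι : Type*} [Fintype ι] [DecidableEq ι]

/- Functional calculus for (Hermitian) matrices, via the spectral theorem.
Junk value `0` if the matrix is not Hermitian. -/
noncomputable def matFun (f : ℝ → ℝ) (A : Matrix ι ι ℂ) : Matrix ι ι ℂ :=
  if hA : A.IsHermitian then
    (hA.eigenvectorUnitary : Matrix ι ι ℂ) *
      Matrix.diagonal (fun i => (f (hA.eigenvalues i) : ℂ)) *
      star (hA.eigenvectorUnitary : Matrix ι ι ℂ)
  else 0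

/-- Matrix logarithm (of a Hermitian matrix). -/
noncomputable def matLog (A : Matrix ι ι ℂ) : Matrix ι ι ℂ := matFun Real.log A

/-- Matrix square root (of a Hermitian matrix). -/
noncomputable def matSqrt (A : Matrix ι ι ℂ) : Matrix ι ι ℂ := matFun Real.sqrt A

/-- Quantum relative entropy `D(ρ‖σ) = Tr[ρ (log ρ - log σ)]`. -/
noncomputable def relEntropy (ρ σ : Matrix ι ι ℂ) : ℝ :=
  ((ρ * (matLog ρ - matLog σ)).trace).re

/-- Quantum information variance `V(ρ‖σ) = Tr[ρ (log ρ - log σ)²] - D(ρ‖σ)²`. -/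
noncomputable def relVar (ρ σ : Matrix ι ι ℂ) : ℝ :=
  ((ρ * ((matLog ρ - matLog σ) * (matLog ρ - matLog σ))).trace).re - (relEntropy ρ σ) ^ 2

/-- A state: positive semidefinite with trace one. -/
def IsState (ρ : Matrix ι ι ℂ) : Prop := ρ.PosSemidef ∧ ρ.trace = 1

/-- A faithful state: positive definite with trace one. -/
def IsFaithfulState (ρ : Matrix ι ι ℂ) : Prop := ρ.PosDef ∧ ρ.trace = 1

/-- A test: an operator `T` with `0 ≤ T ≤ I`. -/
def IsTest (T : Matrix ι ι ℂ) : Prop := T.PosSemidef ∧ (1 - T).PosSemidef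

/-- Type I error `α(T) = Tr[(I - T) ρ]`. -/
noncomputable def typeI (ρ T : Matrix ι ι ℂ) : ℝ := ((ρ * (1 - T)).trace).re

/-- Type II error `β(T) = Tr[T σ]`. -/
noncomputable def typeII (σ T : Matrix ι ι ℂ) : ℝ := ((σ * T).trace).re

/-- Optimal type II (Stein) error under the constraint `α(T) ≤ ε`. -/
noncomputable def steinErr (ρ σ : Matrix ι ι ℂ) (ε : ℝ) : ℝ :=
  sInf {b : ℝ | ∃ T : Matrix ι ι ℂ, IsTest T ∧ typeI ρ T ≤ ε ∧ typeII σ T = b}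

/-- The ε-hypothesis testing relative entropy. -/
noncomputable def DH (ρ σ : Matrix ι ι ℂ) (ε : ℝ) : ℝ := - Real.log (steinErr ρ σ ε)

/- `‖log Δ_{σ|ρ} + D(ρ‖σ) id‖`, i.e. the maximum of
`|log μ - log λ + D(ρ‖σ)|` over eigenvalues `λ` of `ρ` and `μ` of `σ`. -/
open Classical in
noncomputable def shiftNorm (ρ σ : Matrix ι ι ℂ) : ℝ :=
  if h : ρ.IsHermitian ∧ σ.IsHermitian then
    ⨆ i : ι, ⨆ j : ι,
      |Real.log (h.2.eigenvalues j) - Real.log (h.1.eigenvalues i) + relEntropy ρ σ|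
  else 0

/- Largest eigenvalue of a Hermitian matrix. -/
open Classical in
noncomputable def lamMax (A : Matrix ι ι ℂ) : ℝ :=
  if hA : A.IsHermitian then ⨆ i : ι, hA.eigenvalues i else 0

/- Smallest eigenvalue of a Hermitian matrix. -/
open Classical in
noncomputable def lamMin (A : Matrix ι ι ℂ) : ℝ :=
  if hA : A.IsHermitian then ⨅ i : ι, hA.eigenvalues i else 0

/- The Loewner order: `A ≤ B` iff `B - A` is positive semidefinite. -/
def loewnerLE {κ : Type*} [Fintype κ] (A B : Matrix κ κ ℂ) : Prop := (B - A).PosSemidef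

/-- Splitting off the last tensor factor: `(Fin (n+1) → X) ≃ (Fin n → X) × X`. -/
def splitLast (X : Type*) (n : ℕ) : (Fin (n + 1) → X) ≃ (Fin n → X) × X where
  toFun f := (fun i => f i.castSucc, f (Fin.last n))
  invFun p := Fin.snoc p.1 p.2
  left_inv f := by
    funext i
    induction i using Fin.lastCases with
    | last => simp
    | cast i => simp
  right_inv p := by
    refine Prod.ext ?_ ?_
    · funext i; simp
    · simp

/-- The tensor product `A ⊗ B` of a state on `H^{⊗(n+1)}` with a state on `H`, viewed as a
state on `H^{⊗(n+2)}`. -/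
noncomputable def tensorExt {d n : ℕ}
    (A : Matrix (Fin (n + 1) → Fin d) (Fin (n + 1) → Fin d) ℂ)
    (B : Matrix (Fin d) (Fin d) ℂ) :
    Matrix (Fin (n + 2) → Fin d) (Fin (n + 2) → Fin d) ℂ :=
  Matrix.reindex (splitLast (Fin d) (n + 1)).symm (splitLast (Fin d) (n + 1)).symm
    (Matrix.kroneckerMap (· * ·) A B)

/-- The canonical identification `H^{⊗1} ≅ H` applied to a matrix. -/
noncomputable def asOne {d : ℕ} (A : Matrix (Fin 1 → Fin d) (Fin 1 → Fin d) ℂ) :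
    Matrix (Fin d) (Fin d) ℂ :=
  Matrix.reindex (Equiv.funUnique (Fin 1) (Fin d)) (Equiv.funUnique (Fin 1) (Fin d)) A

/-- The canonical identification `H ≅ H^{⊗1}` applied to a matrix. -/
noncomputable def toOne {d : ℕ} (A : Matrix (Fin d) (Fin d) ℂ) :
    Matrix (Fin 1 → Fin d) (Fin 1 → Fin d) ℂ :=
  Matrix.reindex (Equiv.funUnique (Fin 1) (Fin d)).symm (Equiv.funUnique (Fin 1) (Fin d)).symm A

/-- Tensor product `A 0 ⊗ A 1 ⊗ ⋯ ⊗ A (n-1)` of a family of matrices. -/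
noncomputable def tensorFamily {dm : ℕ → ℕ} (n : ℕ)
    (A : (k : ℕ) → Matrix (Fin (dm k)) (Fin (dm k)) ℂ) :
    Matrix ((k : Fin n) → Fin (dm k)) ((k : Fin n) → Fin (dm k)) ℂ :=
  Matrix.of fun a b => ∏ k : Fin n, A k.1 (a k) (b k)

/-- Rank-one spectral projection onto the `i`-th eigenvector of a Hermitian matrix. -/
noncomputable def eigProj {A : Matrix ι ι ℂ} (hA : A.IsHermitian) (i : ι) : Matrix ι ι ℂ :=
  Matrix.of fun a b =>
    (hA.eigenvectorUnitary : Matrix ι ι ℂ) a i * star ((hA.eigenvectorUnitary : Matrix ι ι ℂ) b i)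

/- The mass `μ_{σ|ρ}(S)` of a set `S ⊆ ℝ` under the spectral measure of
`log Δ_{σ|ρ}` w.r.t. `Ω_ρ = ρ^{1/2}`:
`Σ Tr[P_μ(σ) ρ^{1/2} P_λ(ρ) ρ^{1/2}]` over eigenvalue pairs with `log μ - log λ ∈ S`. -/
open Classical in
noncomputable def specMassSet (ρ σ : Matrix ι ι ℂ) (S : Set ℝ) : ℝ :=
  if h : ρ.IsHermitian ∧ σ.IsHermitian then
    ∑ i : ι, ∑ j : ι,
      if Real.log (h.2.eigenvalues j) - Real.log (h.1.eigenvalues i) ∈ S then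
        ((eigProj h.2 j * matSqrt ρ * eigProj h.1 i * matSqrt ρ).trace).re
      else 0
  else 0

/- The spectral measure `μ_{σ|ρ}` of `log Δ_{σ|ρ}` with respect to `Ω_ρ = ρ^{1/2}`,
as a measure on `ℝ`. -/
open Classical in
noncomputable def specMeasure (ρ σ : Matrix ι ι ℂ) : Measure ℝ :=
  if h : ρ.IsHermitian ∧ σ.IsHermitian then
    ∑ i : ι, ∑ j : ι,
      (ENNReal.ofReal (((eigProj h.2 j * matSqrt ρ * eigProj h.1 i * matSqrt ρ).trace).re)) •
        Measure.dirac (Real.log (h.2.eigenvalues j) - Real.log (h.1.eigenvalues i))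
  else 0

/-- Binary relative entropy. -/
noncomputable def Dbin (p q : ℝ) : ℝ :=
  p * Real.log (p / q) + (1 - p) * Real.log ((1 - p) / (1 - q))

section Channels

variable {ι : Type*} [Fintype ι] [DecidableEq ι]
variable {X : Type*} [Fintype X] [DecidableEq X]

/-- A POVM with `M` outcomes. -/
def IsPOVM {M : ℕ} (T : Fin M → Matrix ι ι ℂ) : Prop :=
  (∀ k, (T k).PosSemidef) ∧ ∑ k, T k = 1

/-- Average success probability of a code for a classical-quantum channel. -/
noncomputable def avgSuccess {M : ℕ} (W : X → Matrix ι ι ℂ)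
    (x : Fin M → X) (T : Fin M → Matrix ι ι ℂ) : ℝ :=
  (1 / M : ℝ) * ∑ k, ((W (x k) * T k).trace).re

/-- Existence of a code of size `M` with average error at most `ε`. -/
def IsCode (W : X → Matrix ι ι ℂ) (M : ℕ) (ε : ℝ) : Prop :=
  ∃ (x : Fin M → X) (T : Fin M → Matrix ι ι ℂ), IsPOVM T ∧ 1 - ε ≤ avgSuccess W x T

/-- One-shot ε-error capacity `C(W, ε) = log M*(W, ε)`. -/
noncomputable def capacity (W : X → Matrix ι ι ℂ) (ε : ℝ) : ℝ :=
  Real.log ((sSup {M : ℕ | IsCode W M ε} : ℕ) : ℝ)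

/-- The average output state `W(p) = Σ_x p(x) W(x)`. -/
noncomputable def mix (W : X → Matrix ι ι ℂ) (p : X → ℝ) : Matrix ι ι ℂ :=
  ∑ x, (p x : ℂ) • W x

/-- The Holevo capacity `χ*(W) = sup_p Σ_x p(x) D(W(x)‖W(p))`. -/
noncomputable def holevoCap (W : X → Matrix ι ι ℂ) : ℝ :=
  sSup {v : ℝ | ∃ p : X → ℝ, (∀ x, 0 ≤ p x) ∧ ∑ x, p x = 1 ∧
    v = ∑ x, p x * relEntropy (W x) (mix W p)}

/-- A probability mass function achieving the Holevo capacity. -/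
def IsMaximizer (W : X → Matrix ι ι ℂ) (p : X → ℝ) : Prop :=
  (∀ x, 0 ≤ p x) ∧ ∑ x, p x = 1 ∧
    ∑ x, p x * relEntropy (W x) (mix W p) = holevoCap W

/-- The lifted state `ρ_p = Σ_x p(x) |x⟩⟨x| ⊗ W(x)`. -/
noncomputable def liftRho (W : X → Matrix ι ι ℂ) (p : X → ℝ) : Matrix (X × ι) (X × ι) ℂ :=
  Matrix.of fun a b => if a.1 = b.1 then (p a.1 : ℂ) * W a.1 a.2 b.2 else 0

/-- The lifted state `σ_p = Σ_x p(x) |x⟩⟨x| ⊗ W(p)`. -/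
noncomputable def liftSigma (W : X → Matrix ι ι ℂ) (p : X → ℝ) : Matrix (X × ι) (X × ι) ℂ :=
  Matrix.of fun a b => if a.1 = b.1 then (p a.1 : ℂ) * (mix W p) a.2 b.2 else 0

/-- The memoryless product channel `W^{⊗n}`. -/
noncomputable def prodChannel {d : ℕ} (W : X → Matrix (Fin d) (Fin d) ℂ) (n : ℕ) :
    (Fin n → X) → Matrix (Fin n → Fin d) (Fin n → Fin d) ℂ :=
  fun x => Matrix.of fun a b => ∏ k, W (x k) (a k) (b k)

/-- The single-letter channel `W_1 : X → D(H)` underlying a channel family with memory. -/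
noncomputable def chan1 {d : ℕ}
    (W : (n : ℕ) → (Fin (n + 1) → X) → Matrix (Fin (n + 1) → Fin d) (Fin (n + 1) → Fin d) ℂ) :
    X → Matrix (Fin d) (Fin d) ℂ :=
  fun x => asOne (W 0 (fun _ => x))

end Channels

section CPmaps

/-- Amplification `id_F ⊗ Ψ` of a map `Ψ` on matrix algebras, acting blockwise. -/
noncomputable def ampl {F I J : Type*} [Fintype F] [Fintype I] [Fintype J]
    (Ψ : Matrix I I ℂ → Matrix J J ℂ) (M : Matrix (F × I) (F × I) ℂ) :
    Matrix (F × J) (F × J) ℂ :=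
  Matrix.of fun p q => Ψ (Matrix.of fun a b => M (p.1, a) (q.1, b)) p.2 q.2

/-- Complete positivity of a map between matrix algebras. -/
def IsCP {I J : Type*} [Fintype I] [Fintype J]
    (Ψ : Matrix I I ℂ → Matrix J J ℂ) : Prop :=
  ∀ (m : ℕ) (M : Matrix (Fin m × I) (Fin m × I) ℂ), M.PosSemidef → (ampl Ψ M).PosSemidef

/-- Trace preservation of a map between matrix algebras. -/
def IsTP {I J : Type*} [Fintype I] [Fintype J]
    (Ψ : Matrix I I ℂ → Matrix J J ℂ) : Prop :=
  ∀ x, (Ψ x).trace = x.trace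

/-- Partial trace over the second tensor factor. -/
noncomputable def ptraceSnd {I K : Type*} [Fintype K] (M : Matrix (I × K) (I × K) ℂ) :
    Matrix I I ℂ :=
  Matrix.of fun a b => ∑ k, M (a, k) (b, k)

/-- Partial trace over the first tensor factor. -/
noncomputable def ptraceFst {I K : Type*} [Fintype I] (M : Matrix (I × K) (I × K) ℂ) :
    Matrix K K ℂ :=
  Matrix.of fun i j => ∑ a, M (a, i) (a, j)

/-- Reindexing `A ⊗ K ≅ A^{⊗1} ⊗ K`. -/
def tauEquiv0 (dA dK : ℕ) : (Fin dA × Fin dK) ≃ ((Fin 1 → Fin dA) × Fin dK) :=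
  Equiv.prodCongr (Equiv.funUnique (Fin 1) (Fin dA)).symm (Equiv.refl (Fin dK))

/-- Reindexing `A^{⊗(n+1)} ⊗ (A ⊗ K) ≅ A^{⊗(n+2)} ⊗ K`. -/
def tauEquivS (dA dK n : ℕ) :
    ((Fin (n + 1) → Fin dA) × (Fin dA × Fin dK)) ≃ ((Fin (n + 2) → Fin dA) × Fin dK) :=
  (Equiv.prodAssoc (Fin (n + 1) → Fin dA) (Fin dA) (Fin dK)).symm.trans
    (Equiv.prodCongr (splitLast (Fin dA) (n + 1)).symm (Equiv.refl (Fin dK)))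

/-- The states `τ_n` generated by a family of CPTP maps `E_n` and an initial state `ρ`:
`τ_1 = E_{1*}(ρ)`, `τ_{n+1} = (id^{⊗n} ⊗ E_{(n+1)*})(τ_n)` (here `fcsTau E ρ n` is `τ_{n+1}`). -/
noncomputable def fcsTau {dA dK : ℕ}
    (E : ℕ → Matrix (Fin dK) (Fin dK) ℂ →ₗ[ℂ] Matrix (Fin dA × Fin dK) (Fin dA × Fin dK) ℂ)
    (ρ : Matrix (Fin dK) (Fin dK) ℂ) :
    (n : ℕ) → Matrix ((Fin (n + 1) → Fin dA) × Fin dK) ((Fin (n + 1) → Fin dA) × Fin dK) ℂ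
  | 0 => Matrix.reindex (tauEquiv0 dA dK) (tauEquiv0 dA dK) (E 0 ρ)
  | n + 1 => Matrix.reindex (tauEquivS dA dK n) (tauEquivS dA dK n)
      (ampl (E (n + 1)) (fcsTau E ρ n))

end CPmaps


section KSAux
open Real Set ProbabilityTheory

/-- `y - 1/y - 2 log y ≥ 0` for `y ≥ 1`. -/
lemma two_log_le {y : ℝ} (hy : 1 ≤ y) : 2 * Real.log y ≤ y - 1/y := by
  set f : ℝ → ℝ := fun x => x - 1/x - 2 * Real.log x with hf
  have hder : ∀ x : ℝ, 0 < x → HasDerivAt f (1 + (x^2)⁻¹ - 2 * x⁻¹) x := by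
    intro x hx
    have h1 : HasDerivAt (fun x : ℝ => 1/x) (-(x^2)⁻¹) x := by
      simpa [one_div] using hasDerivAt_inv hx.ne'
    have h2 : HasDerivAt (fun x : ℝ => 2 * Real.log x) (2 * x⁻¹) x :=
      (Real.hasDerivAt_log hx.ne').const_mul 2
    have := ((hasDerivAt_id x).sub h1).sub h2
    exact this.congr_deriv (by ring)
  have hmono : MonotoneOn f (Ici 1) := by
    apply monotoneOn_of_deriv_nonneg (convex_Ici 1)
    · intro x hx
      exact (hder x (lt_of_lt_of_le one_pos hx)).continuousAt.continuousWithinAt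
    · intro x hx
      rw [interior_Ici] at hx
      exact (hder x (lt_trans one_pos hx)).differentiableAt.differentiableWithinAt
    · intro x hx
      rw [interior_Ici] at hx
      have h1x : (0:ℝ) < x := lt_trans one_pos hx
      rw [(hder x h1x).deriv]
      have : 1 + (x^2)⁻¹ - 2 * x⁻¹ = (1 - x⁻¹)^2 + ((x^2)⁻¹ - (x⁻¹)^2) := by ring
      rw [this, ← inv_pow]
      nlinarith [sq_nonneg (1 - x⁻¹)]
  have := hmono (self_mem_Ici) (show y ∈ Ici 1 from hy) hy
  simp only [f] at this
  norm_num at this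
  rw [one_div]
  linarith

noncomputable def KD (p s : ℝ) : ℝ := 1 - p + p * Real.exp s
noncomputable def Ku (p s : ℝ) : ℝ := p * Real.exp s / KD p s
noncomputable def Kg (p s : ℝ) : ℝ := Real.log (KD p s) - p * s
noncomputable def Kd (p K s : ℝ) : ℝ := 2*K*s - (Ku p s - p)
noncomputable def Kphi (p K s : ℝ) : ℝ := K * s^2 - Kg p s
noncomputable def Kconst (p : ℝ) : ℝ :=
  if p = 1/2 then 1/8 else (1 - 2*p)/(4*Real.log ((1-p)/p))

variable {p K : ℝ}

lemma KD_pos (hp0 : 0 < p) (hp1 : p < 1) (s : ℝ) : 0 < KD p s := by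
  have := Real.exp_pos s
  have : 0 < p * Real.exp s := mul_pos hp0 this
  unfold KD; linarith

lemma Ku_pos (hp0 : 0 < p) (hp1 : p < 1) (s : ℝ) : 0 < Ku p s :=
  div_pos (mul_pos hp0 (Real.exp_pos s)) (KD_pos hp0 hp1 s)

lemma Ku_lt_one (hp0 : 0 < p) (hp1 : p < 1) (s : ℝ) : Ku p s < 1 := by
  rw [Ku, div_lt_one (KD_pos hp0 hp1 s), KD]
  linarith

lemma Ku_mono (hp0 : 0 < p) (hp1 : p < 1) {s t : ℝ} (hst : s ≤ t) : Ku p s ≤ Ku p t := by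
  rw [Ku, Ku, div_le_div_iff₀ (KD_pos hp0 hp1 s) (KD_pos hp0 hp1 t)]
  have he : Real.exp s ≤ Real.exp t := Real.exp_le_exp.2 hst
  have h1 : (0:ℝ) < 1 - p := by linarith
  unfold KD
  nlinarith [Real.exp_pos s, Real.exp_pos t, mul_nonneg (mul_nonneg hp0.le h1.le) (sub_nonneg.2 he)]

lemma Ku_zero (hp1 : p < 1) : Ku p 0 = p := by
  have h1 : (0:ℝ) < 1 - p := by linarith
  rw [Ku, KD, Real.exp_zero]
  field_simp
  ring

lemma hasDerivAt_Kg (hp0 : 0 < p) (hp1 : p < 1) (s : ℝ) :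
    HasDerivAt (Kg p) (Ku p s - p) s := by
  have hD : HasDerivAt (KD p) (p * Real.exp s) s := by
    exact ((Real.hasDerivAt_exp s).const_mul p).const_add (1 - p)
  have := (hD.log (KD_pos hp0 hp1 s).ne').sub ((hasDerivAt_id s).const_mul p)
  refine HasDerivAt.congr_deriv this ?_
  rw [Ku]; ring

lemma hasDerivAt_Kphi (hp0 : 0 < p) (hp1 : p < 1) (s : ℝ) :
    HasDerivAt (Kphi p K) (Kd p K s) s := by
  have h1 : HasDerivAt (fun s : ℝ => K * s^2) (K * (2*s)) s := by
    simpa using ((hasDerivAt_pow 2 s).const_mul K)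
  have := h1.sub (hasDerivAt_Kg hp0 hp1 s)
  exact this.congr_deriv (by unfold Kd; ring)

lemma hasDerivAt_Kd (hp0 : 0 < p) (hp1 : p < 1) (s : ℝ) :
    HasDerivAt (Kd p K) (2*K - Ku p s * (1 - Ku p s)) s := by
  have hD : HasDerivAt (KD p) (p * Real.exp s) s := by
    exact ((Real.hasDerivAt_exp s).const_mul p).const_add (1 - p)
  have hN : HasDerivAt (fun s => p * Real.exp s) (p * Real.exp s) s :=
    (Real.hasDerivAt_exp s).const_mul p
  have hu : HasDerivAt (Ku p)
      ((p * Real.exp s * KD p s - p * Real.exp s * (p * Real.exp s)) / (KD p s)^2) s :=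
    hN.div hD (KD_pos hp0 hp1 s).ne'
  have h1 : HasDerivAt (fun s : ℝ => 2*K*s) (2*K) s := by
    simpa using (hasDerivAt_id s).const_mul (2*K)
  have := h1.sub (hu.sub (hasDerivAt_const s p))
  refine this.congr_deriv ?_
  have hDne : KD p s ≠ 0 := (KD_pos hp0 hp1 s).ne'
  have : Ku p s * (1 - Ku p s)
      = (p * Real.exp s * KD p s - p * Real.exp s * (p * Real.exp s)) / (KD p s)^2 := by
    rw [Ku]
    field_simp
  rw [this]; ring

lemma KS_key (hp0 : 0 < p) (hp2 : p < 1/2) :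
    p * (1 - p) * (2 * Real.log ((1-p)/p)) ≤ 1 - 2*p := by
  have h1 : (0:ℝ) < 1 - p := by linarith
  set y := Real.sqrt ((1-p)/p) with hy
  have hx1 : (1:ℝ) ≤ (1-p)/p := by rw [le_div_iff₀ hp0]; linarith
  have hy1 : 1 ≤ y := Real.one_le_sqrt.2 hx1
  have hy2 : y^2 = (1-p)/p := Real.sq_sqrt (by positivity)
  have hyge : 2*(1-p) ≤ y := by
    have h4 : (2*(1-p))^2 ≤ (1-p)/p := by
      rw [le_div_iff₀ hp0]
      nlinarith [mul_nonneg h1.le (sq_nonneg (1-2*p))]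
    nlinarith [hy2, h1]
  have hlog : Real.log ((1-p)/p) = 2 * Real.log y := by
    rw [hy, Real.log_sqrt (by positivity)]; ring
  have hkey := two_log_le hy1
  have hy0 : 0 < y := lt_of_lt_of_le one_pos hy1
  have h5 : 2 * Real.log y * y ≤ y^2 - 1 := by
    have := mul_le_mul_of_nonneg_right hkey hy0.le
    rw [sub_mul, div_mul_cancel₀] at this
    · nlinarith
    · exact hy0.ne'
  rw [hlog]
  -- 2 log y ≤ (y²-1)/y = ((1-2p)/p)/y;  p(1-p)·2·2logy ≤ ...
  have h6 : y^2 - 1 = (1-2*p)/p := by rw [hy2]; field_simp; ring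
  have h7 : 2 * Real.log y * (2*(1-p)) ≤ y^2 - 1 := by
    have hlogpos : 0 ≤ 2 * Real.log y := by
      have := Real.log_nonneg hy1; linarith
    nlinarith [mul_le_mul_of_nonneg_left hyge hlogpos]
  rw [h6] at h7
  have := mul_le_mul_of_nonneg_right h7 hp0.le
  rw [div_mul_cancel₀ _ hp0.ne'] at this
  nlinarith

set_option maxHeartbeats 1000000 in
/-- Core inequality, case `p < 1/2`. -/
lemma KS_phi_nonneg (hp0 : 0 < p) (hp2 : p < 1/2) (s : ℝ) :
    0 ≤ Kphi p ((1 - 2*p)/(4*Real.log ((1-p)/p))) s := by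
  have hp1 : p < 1 := by linarith
  have h1 : (0:ℝ) < 1 - p := by linarith
  set L := Real.log ((1-p)/p) with hLdef
  have hL : 0 < L := Real.log_pos (by rw [lt_div_iff₀ hp0]; linarith)
  set K := (1 - 2*p)/(4*L) with hKdef
  have hK : 0 < K := div_pos (by linarith) (by linarith)
  have heL : Real.exp L = (1-p)/p := Real.exp_log (div_pos h1 hp0)
  have he2L : Real.exp (2*L) = ((1-p)/p)^2 := by
    rw [two_mul, Real.exp_add, heL]; ring
  have h4KL : 2*K*(2*L) = 1 - 2*p := by
    rw [hKdef]; field_simp; ring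
  -- u values
  have hu0 : Ku p 0 = p := Ku_zero hp1
  have hKD2L : KD p (2*L) = (1-p)/p := by
    rw [KD, he2L]; field_simp; ring
  have hu2L : Ku p (2*L) = 1 - p := by
    rw [Ku, hKD2L, he2L]; field_simp
  -- key: p(1-p) ≤ 2K
  have key : p * (1-p) ≤ 2*K := by
    have hk := KS_key hp0 hp2
    rw [← hLdef] at hk
    rw [hKdef]
    rw [show (2:ℝ)*((1-2*p)/(4*L)) = (1-2*p)/(2*L) by field_simp; ring]
    rw [le_div_iff₀ (by linarith : (0:ℝ) < 2*L)]
    nlinarith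
  -- pointwise u bounds
  have hu_le_p : ∀ s : ℝ, s ≤ 0 → Ku p s ≤ p := by
    intro s hs
    have he : Real.exp s ≤ 1 := by
      have := Real.exp_le_exp.2 hs; rwa [Real.exp_zero] at this
    rw [Ku, div_le_iff₀ (KD_pos hp0 hp1 s), KD]
    nlinarith [mul_nonneg (mul_nonneg hp0.le h1.le) (sub_nonneg.2 he)]
  have hu_ge_q : ∀ s : ℝ, 2*L ≤ s → 1 - p ≤ Ku p s := by
    intro s hs
    have he : ((1-p)/p)^2 ≤ Real.exp s := by
      rw [← he2L]; exact Real.exp_le_exp.2 hs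
    have he' : (1-p)^2 ≤ p^2 * Real.exp s := by
      have h := mul_le_mul_of_nonneg_left he (by positivity : (0:ℝ) ≤ p^2)
      have : p^2 * ((1-p)/p)^2 = (1-p)^2 := by field_simp
      linarith [this ▸ h]
    rw [Ku, le_div_iff₀ (KD_pos hp0 hp1 s), KD]
    nlinarith
  have hu_le_half : ∀ s : ℝ, s ≤ L → Ku p s ≤ 1/2 := by
    intro s hs
    have he : Real.exp s ≤ (1-p)/p := by rw [← heL]; exact Real.exp_le_exp.2 hs
    have hpe : p * Real.exp s ≤ 1 - p := by
      have h := mul_le_mul_of_nonneg_left he hp0.le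
      have : p * ((1-p)/p) = 1-p := by field_simp
      linarith [this ▸ h]
    rw [Ku, div_le_iff₀ (KD_pos hp0 hp1 s), KD]
    linarith
  have hu_ge_half : ∀ s : ℝ, L ≤ s → 1/2 ≤ Ku p s := by
    intro s hs
    have he : (1-p)/p ≤ Real.exp s := by rw [← heL]; exact Real.exp_le_exp.2 hs
    have hpe : 1 - p ≤ p * Real.exp s := by
      have h := mul_le_mul_of_nonneg_left he hp0.le
      have : p * ((1-p)/p) = 1-p := by field_simp
      linarith [this ▸ h]
    rw [Ku, le_div_iff₀ (KD_pos hp0 hp1 s), KD]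
    linarith
  -- derivative identities
  have hφ' : ∀ s : ℝ, deriv (Kphi p K) s = Kd p K s :=
    fun s => (hasDerivAt_Kphi hp0 hp1 s).deriv
  have hd' : ∀ s : ℝ, deriv (Kd p K) s = 2*K - Ku p s * (1 - Ku p s) :=
    fun s => (hasDerivAt_Kd hp0 hp1 s).deriv
  have hφcont : Continuous (Kphi p K) := by
    rw [continuous_iff_continuousAt]
    exact fun s => (hasDerivAt_Kphi hp0 hp1 s).continuousAt
  have hdcont : Continuous (Kd p K) := by
    rw [continuous_iff_continuousAt]
    exact fun s => (hasDerivAt_Kd hp0 hp1 s).continuousAt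
  have hφdiff : ∀ t : Set ℝ, DifferentiableOn ℝ (Kphi p K) t :=
    fun t x _ => (hasDerivAt_Kphi hp0 hp1 x).differentiableAt.differentiableWithinAt
  have hddiff : ∀ t : Set ℝ, DifferentiableOn ℝ (Kd p K) t :=
    fun t x _ => (hasDerivAt_Kd hp0 hp1 x).differentiableAt.differentiableWithinAt
  -- values of d and φ at 0 and 2L
  have hd0 : Kd p K 0 = 0 := by rw [Kd, hu0]; ring
  have hd2L : Kd p K (2*L) = 0 := by rw [Kd, hu2L]; linarith
  have hφ0 : Kphi p K 0 = 0 := by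
    have hKD0 : KD p 0 = 1 := by rw [KD, Real.exp_zero]; ring
    rw [Kphi, Kg, hKD0, Real.log_one]; ring
  have hφ2L : Kphi p K (2*L) = 0 := by
    have hlog2L : Real.log (KD p (2*L)) = L := by rw [hKD2L]
    have hsq : K*(2*L)^2 = (1-2*p)*L := by
      have : K*(2*L)^2 = (2*K*(2*L))*L := by ring
      rw [this, h4KL]
    rw [Kphi, Kg, hlog2L, hsq]; ring
  -- region s ≤ 0
  have hdmono_neg : MonotoneOn (Kd p K) (Iic 0) := by
    apply monotoneOn_of_deriv_nonneg (convex_Iic 0) hdcont.continuousOn (hddiff _)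
    intro x hx
    rw [interior_Iic] at hx
    rw [hd' x]
    have hup := hu_le_p x hx.le
    have hu0x := Ku_pos hp0 hp1 x
    nlinarith [mul_nonneg (sub_nonneg.2 hup) (show (0:ℝ) ≤ 1 - p - Ku p x by linarith)]
  have hφneg : ∀ s : ℝ, s ≤ 0 → 0 ≤ Kphi p K s := by
    intro s hs
    have hanti : AntitoneOn (Kphi p K) (Iic 0) := by
      apply antitoneOn_of_deriv_nonpos (convex_Iic 0) hφcont.continuousOn (hφdiff _)
      intro x hx
      rw [interior_Iic] at hx
      rw [hφ' x]
      have := hdmono_neg (mem_Iic.2 hx.le) (mem_Iic.2 le_rfl) hx.le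
      rwa [hd0] at this
    have := hanti (mem_Iic.2 hs) (mem_Iic.2 le_rfl) hs
    rwa [hφ0] at this
  -- region s ≥ 2L
  have hdmono_pos : MonotoneOn (Kd p K) (Ici (2*L)) := by
    apply monotoneOn_of_deriv_nonneg (convex_Ici (2*L)) hdcont.continuousOn (hddiff _)
    intro x hx
    rw [interior_Ici] at hx
    rw [hd' x]
    have huq := hu_ge_q x hx.le
    have hu1x := Ku_lt_one hp0 hp1 x
    nlinarith [mul_nonneg (sub_nonneg.2 huq) (show (0:ℝ) ≤ Ku p x - p by linarith)]
  have hφpos : ∀ s : ℝ, 2*L ≤ s → 0 ≤ Kphi p K s := by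
    intro s hs
    have hmono : MonotoneOn (Kphi p K) (Ici (2*L)) := by
      apply monotoneOn_of_deriv_nonneg (convex_Ici (2*L)) hφcont.continuousOn (hφdiff _)
      intro x hx
      rw [interior_Ici] at hx
      rw [hφ' x]
      have := hdmono_pos (mem_Ici.2 le_rfl) (mem_Ici.2 hx.le) hx.le
      rwa [hd2L] at this
    have := hmono (mem_Ici.2 le_rfl) (mem_Ici.2 hs) hs
    rwa [hφ2L] at this
  -- middle region
  have hmid : ∀ s ∈ Icc (0:ℝ) (2*L), 0 ≤ Kphi p K s := by
    obtain ⟨s0, hs0mem, hmin⟩ := (isCompact_Icc : IsCompact (Icc (0:ℝ) (2*L))).exists_isMinOn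
      (nonempty_Icc.2 (by linarith : (0:ℝ) ≤ 2*L)) hφcont.continuousOn
    have h0le : (0:ℝ) ≤ s0 := hs0mem.1
    have hle2L : s0 ≤ 2*L := hs0mem.2
    suffices h : 0 ≤ Kphi p K s0 by
      intro s hs
      exact le_trans h (hmin hs)
    rcases eq_or_lt_of_le h0le with h0 | h0
    · rw [← h0, hφ0]
    rcases eq_or_lt_of_le hle2L with h2 | h2
    · rw [h2, hφ2L]
    have hloc : IsLocalMin (Kphi p K) s0 := hmin.isLocalMin (Icc_mem_nhds h0 h2)
    have hds0 : Kd p K s0 = 0 := by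
      have := hloc.deriv_eq_zero
      rwa [hφ' s0] at this
    rcases le_total s0 L with hsL | hsL
    · -- concavity of d on [0, L], d ≥ 0 on [0, s0], φ increasing
      have hanti : AntitoneOn (deriv (Kd p K)) (interior (Icc (0:ℝ) L)) := by
        intro x hx y hy hxy
        rw [interior_Icc] at hx hy
        rw [hd' x, hd' y]
        have h1xy := Ku_mono hp0 hp1 hxy
        have h2x := hu_le_half x hx.2.le
        have h2y := hu_le_half y hy.2.le
        nlinarith [mul_nonneg (sub_nonneg.2 h1xy)
          (show (0:ℝ) ≤ 1 - Ku p x - Ku p y by linarith)]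
      have hconc : ConcaveOn ℝ (Icc (0:ℝ) L) (Kd p K) :=
        hanti.concaveOn_of_deriv (convex_Icc _ _) hdcont.continuousOn (hddiff _)
      have hdpos : ∀ t ∈ Icc (0:ℝ) s0, 0 ≤ Kd p K t := by
        intro t ht
        have hbnn : 0 ≤ t/s0 := div_nonneg ht.1 h0.le
        have hb1 : t/s0 ≤ 1 := (div_le_one h0).2 ht.2
        have hcomb : (1 - t/s0) • (0:ℝ) + (t/s0) • s0 = t := by
          simp only [smul_eq_mul]
          field_simp
          ring
        have := hconc.2 (show (0:ℝ) ∈ Icc (0:ℝ) L from ⟨le_rfl, hL.le⟩)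
          (show s0 ∈ Icc (0:ℝ) L from ⟨h0.le, hsL⟩)
          (by linarith : (0:ℝ) ≤ 1 - t/s0) hbnn (by ring)
        rw [hcomb, hd0, hds0] at this
        simpa using this
      have hφmono : MonotoneOn (Kphi p K) (Icc (0:ℝ) s0) := by
        apply monotoneOn_of_deriv_nonneg (convex_Icc _ _) hφcont.continuousOn (hφdiff _)
        intro x hx
        rw [interior_Icc] at hx
        rw [hφ' x]
        exact hdpos x ⟨hx.1.le, hx.2.le⟩
      have := hφmono (left_mem_Icc.2 h0.le) (right_mem_Icc.2 h0.le) h0.le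
      rwa [hφ0] at this
    · -- convexity of d on [L, 2L], d ≤ 0 on [s0, 2L], φ decreasing
      have hmono' : MonotoneOn (deriv (Kd p K)) (interior (Icc L (2*L))) := by
        intro x hx y hy hxy
        rw [interior_Icc] at hx hy
        rw [hd' x, hd' y]
        have h1xy := Ku_mono hp0 hp1 hxy
        have h2x := hu_ge_half x hx.1.le
        have h2y := hu_ge_half y hy.1.le
        nlinarith [mul_nonneg (sub_nonneg.2 h1xy)
          (show (0:ℝ) ≤ Ku p x + Ku p y - 1 by linarith)]
      have hconv : ConvexOn ℝ (Icc L (2*L)) (Kd p K) :=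
        hmono'.convexOn_of_deriv (convex_Icc _ _) hdcont.continuousOn (hddiff _)
      have hdneg : ∀ t ∈ Icc s0 (2*L), Kd p K t ≤ 0 := by
        intro t ht
        have hden : 0 < 2*L - s0 := by linarith
        set b := (t - s0)/(2*L - s0) with hb
        have hbnn : 0 ≤ b := div_nonneg (by linarith [ht.1]) hden.le
        have hb1 : b ≤ 1 := (div_le_one hden).2 (by linarith [ht.2])
        have hcomb : (1 - b) • s0 + b • (2*L) = t := by
          simp only [smul_eq_mul, hb]
          field_simp
          ring
        have := hconv.2 (show s0 ∈ Icc L (2*L) from ⟨hsL, hle2L⟩)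
          (show 2*L ∈ Icc L (2*L) from ⟨by linarith, le_rfl⟩)
          (by linarith : (0:ℝ) ≤ 1 - b) hbnn (by ring)
        rw [hcomb, hd2L, hds0] at this
        simpa using this
      have hφanti : AntitoneOn (Kphi p K) (Icc s0 (2*L)) := by
        apply antitoneOn_of_deriv_nonpos (convex_Icc _ _) hφcont.continuousOn (hφdiff _)
        intro x hx
        rw [interior_Icc] at hx
        rw [hφ' x]
        exact hdneg x ⟨hx.1.le, hx.2.le⟩
      have := hφanti (left_mem_Icc.2 h2.le) (right_mem_Icc.2 h2.le) h2.le
      rwa [hφ2L] at this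
  rcases le_total s 0 with hs | hs
  · exact hφneg s hs
  rcases le_total s (2*L) with hs2 | hs2
  · exact hmid s ⟨hs, hs2⟩
  · exact hφpos s hs2



/-- Case `p = 1/2`. -/
lemma KS_phi_nonneg_half (s : ℝ) : 0 ≤ Kphi (1/2) (1/8) s := by
  have hp0 : (0:ℝ) < 1/2 := by norm_num
  have hp1 : (1:ℝ)/2 < 1 := by norm_num
  have hφ' : ∀ s : ℝ, deriv (Kphi (1/2) (1/8)) s = Kd (1/2) (1/8) s :=
    fun s => (hasDerivAt_Kphi hp0 hp1 s).deriv
  have hd' : ∀ s : ℝ, deriv (Kd (1/2) (1/8)) s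
      = 2*(1/8) - Ku (1/2) s * (1 - Ku (1/2) s) :=
    fun s => (hasDerivAt_Kd hp0 hp1 s).deriv
  have hφcont : Continuous (Kphi (1/2) (1/8)) := by
    rw [continuous_iff_continuousAt]
    exact fun s => (hasDerivAt_Kphi hp0 hp1 s).continuousAt
  have hφdiff : ∀ t : Set ℝ, DifferentiableOn ℝ (Kphi (1/2) (1/8)) t :=
    fun t x _ => (hasDerivAt_Kphi hp0 hp1 x).differentiableAt.differentiableWithinAt
  have hdmono : Monotone (Kd (1/2) (1/8)) := by
    apply monotone_of_deriv_nonneg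
    · exact fun x => (hasDerivAt_Kd hp0 hp1 x).differentiableAt
    · intro x
      rw [hd' x]
      nlinarith [sq_nonneg (Ku (1/2) x - 1/2)]
  have hd0 : Kd (1/2) (1/8) 0 = 0 := by
    rw [Kd, Ku_zero hp1]; ring
  have hφ0 : Kphi (1/2) (1/8) 0 = 0 := by
    have hKD0 : KD (1/2) 0 = 1 := by rw [KD, Real.exp_zero]; ring
    rw [Kphi, Kg, hKD0, Real.log_one]; ring
  rcases le_total s 0 with hs | hs
  · have hanti : AntitoneOn (Kphi (1/2) (1/8)) (Iic 0) := by
      apply antitoneOn_of_deriv_nonpos (convex_Iic 0) hφcont.continuousOn (hφdiff _)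
      intro x hx
      rw [interior_Iic] at hx
      rw [hφ' x]
      have := hdmono hx.le
      rwa [hd0] at this
    have := hanti (mem_Iic.2 hs) (mem_Iic.2 le_rfl) hs
    rwa [hφ0] at this
  · have hmono : MonotoneOn (Kphi (1/2) (1/8)) (Ici 0) := by
      apply monotoneOn_of_deriv_nonneg (convex_Ici 0) hφcont.continuousOn (hφdiff _)
      intro x hx
      rw [interior_Ici] at hx
      rw [hφ' x]
      have := hdmono hx.le
      rwa [hd0] at this
    have := hmono (mem_Ici.2 le_rfl) (mem_Ici.2 hs) hs
    rwa [hφ0] at this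

/-- The Kearns–Saul MGF bound (scalar form). -/
lemma KS_master {p : ℝ} (hp0 : 0 < p) (hp1 : p < 1) (h : ℝ) :
    Real.log (1 - p + p * Real.exp h) - p * h ≤ Kconst p * h^2 := by
  have h1 : (0:ℝ) < 1 - p := by linarith
  rcases lt_trichotomy p (1/2) with hlt | heq | hgt
  · have h0 := KS_phi_nonneg hp0 hlt h
    rw [Kphi, Kg, KD] at h0
    rw [Kconst, if_neg (ne_of_lt hlt)]
    linarith
  · subst heq
    have h0 := KS_phi_nonneg_half h
    rw [Kphi, Kg, KD] at h0
    rw [Kconst, if_pos rfl]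
    norm_num at h0 ⊢
    linarith
  · -- symmetry: apply the `q = 1-p < 1/2` case at `-h`
    set q := 1 - p with hq
    have hq0 : 0 < q := by simp [hq]; linarith
    have hq2 : q < 1/2 := by simp [hq]; linarith
    have h0 := KS_phi_nonneg hq0 hq2 (-h)
    rw [Kphi, Kg, KD] at h0
    have hqq : 1 - q = p := by simp [hq]
    have e1 : Real.log (1 - q + q * Real.exp (-h))
        = Real.log (1 - p + p * Real.exp h) - h := by
      have hpe : (0:ℝ) < 1 - p + p * Real.exp h := by
        have := KD_pos hp0 hp1 h; rwa [KD] at this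
      have : 1 - q + q * Real.exp (-h) = (1 - p + p * Real.exp h) * Real.exp (-h) := by
        rw [hq, Real.exp_neg]
        field_simp
        ring
      rw [this, Real.log_mul hpe.ne' (Real.exp_pos _).ne', Real.log_exp]
      ring
    have e2 : Real.log ((1-q)/q) = - Real.log ((1-p)/p) := by
      rw [hqq, hq, ← Real.log_inv]
      congr 1
      rw [inv_div]
    have e3 : (1 - 2*q)/(4*Real.log ((1-q)/q)) = (1 - 2*p)/(4*Real.log ((1-p)/p)) := by
      rw [e2, hq]
      rw [show (1 - 2*(1-p)) = -(1 - 2*p) by ring, mul_neg, neg_div_neg_eq]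
    rw [e3, e1] at h0
    have hsq : (-h)^2 = h^2 := by ring
    rw [hsq] at h0
    rw [Kconst, if_neg (by intro hc; rw [hc] at hgt; norm_num at hgt)]
    have hqh : q * (-h) = -(h) + p * h := by rw [hq]; ring
    rw [hq] at h0
    linarith

lemma Kconst_pos {p : ℝ} (hp0 : 0 < p) (hp1 : p < 1) : 0 < Kconst p := by
  rcases lt_trichotomy p (1/2) with hlt | heq | hgt
  · rw [Kconst, if_neg (ne_of_lt hlt)]
    have hL : 0 < Real.log ((1-p)/p) := Real.log_pos (by rw [lt_div_iff₀ hp0]; linarith)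
    apply div_pos <;> linarith
  · rw [Kconst, if_pos heq]; norm_num
  · rw [Kconst, if_neg (ne_of_gt hgt)]
    have hL : Real.log ((1-p)/p) < 0 := by
      have h1 : (0:ℝ) < 1 - p := by linarith
      apply Real.log_neg (div_pos h1 hp0)
      rw [div_lt_one hp0]; linarith
    rw [show (1 - 2*p)/(4*Real.log ((1-p)/p))
        = (2*p - 1)/(-(4*Real.log ((1-p)/p))) by rw [div_neg, ← neg_div]; ring_nf]
    apply div_pos <;> linarith



lemma integrable_of_bdd {Ω : Type*} {m : MeasurableSpace Ω} {P : Measure Ω}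
    [IsProbabilityMeasure P] {X : Ω → ℝ} (hX : Measurable X) {a b : ℝ}
    (hbdd : ∀ᵐ ω ∂P, X ω ∈ Set.Icc a b) : Integrable X P := by
  refine Integrable.mono' (integrable_const (max |a| |b|)) hX.aestronglyMeasurable ?_
  filter_upwards [hbdd] with ω hω
  rw [Real.norm_eq_abs]
  exact abs_le_max_abs_abs hω.1 hω.2

lemma integrable_exp_of_bdd {Ω : Type*} {m : MeasurableSpace Ω} {P : Measure Ω}
    [IsProbabilityMeasure P] {X : Ω → ℝ} (hX : Measurable X) {a b : ℝ}
    (hbdd : ∀ᵐ ω ∂P, X ω ∈ Set.Icc a b) (t : ℝ) :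
    Integrable (fun ω => Real.exp (t * X ω)) P := by
  refine Integrable.mono' (integrable_const (Real.exp (max (t*a) (t*b))))
    ((hX.const_mul t).exp).aestronglyMeasurable ?_
  filter_upwards [hbdd] with ω hω
  rw [Real.norm_eq_abs, abs_of_pos (Real.exp_pos _), Real.exp_le_exp]
  rcases le_total 0 t with ht | ht
  · exact le_max_of_le_right (mul_le_mul_of_nonneg_left hω.2 ht)
  · exact le_max_of_le_left (mul_le_mul_of_nonpos_left hω.1 ht)

lemma mgf_le_KS {Ω : Type*} {m : MeasurableSpace Ω} {P : Measure Ω} [IsProbabilityMeasure P]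
    {X : Ω → ℝ} (hX : Measurable X) {a b p : ℝ} (hab : a < b)
    (hbdd : ∀ᵐ ω ∂P, X ω ∈ Set.Icc a b)
    (hp : p = ((∫ ω, X ω ∂P) - a) / (b - a)) (hp0 : 0 < p) (hp1 : p < 1) (t : ℝ) :
    ProbabilityTheory.mgf X P t ≤
      Real.exp (t * (∫ ω, X ω ∂P) + (Kconst p * (b-a)^2) * t^2) := by
  have hba : (0:ℝ) < b - a := by linarith
  set μ := ∫ ω, X ω ∂P with hμ
  set A := Real.exp (t*a) with hA
  set B := Real.exp (t*b) with hB
  have hXint : Integrable X P := integrable_of_bdd hX hbdd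
  have hexpint := integrable_exp_of_bdd hX hbdd t
  -- pointwise convexity bound
  have hconv : ∀ᵐ ω ∂P, Real.exp (t * X ω) ≤
      (b - X ω)/(b-a) * A + (X ω - a)/(b-a) * B := by
    filter_upwards [hbdd] with ω hω
    have h1 : (0:ℝ) ≤ (b - X ω)/(b-a) := div_nonneg (by linarith [hω.2]) hba.le
    have h2 : (0:ℝ) ≤ (X ω - a)/(b-a) := div_nonneg (by linarith [hω.1]) hba.le
    have h3 : (b - X ω)/(b-a) + (X ω - a)/(b-a) = 1 := by field_simp; ring
    have key := convexOn_exp.2 (Set.mem_univ (t*a)) (Set.mem_univ (t*b)) h1 h2 h3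
    simp only [smul_eq_mul] at key
    have heq : (b - X ω)/(b-a) * (t*a) + (X ω - a)/(b-a) * (t*b) = t * X ω := by
      field_simp
      ring
    rwa [heq] at key
  -- integrate
  have hRHS : (fun ω => (b - X ω)/(b-a) * A + (X ω - a)/(b-a) * B)
      = fun ω => (b*A - a*B)/(b-a) + ((B - A)/(b-a)) * X ω := by
    funext ω; field_simp; ring
  have hint2 : Integrable (fun ω => (b*A - a*B)/(b-a) + ((B - A)/(b-a)) * X ω) P :=
    (integrable_const _).add (hXint.const_mul _)
  have hstep1 : ProbabilityTheory.mgf X P t ≤ (b*A - a*B)/(b-a) + ((B - A)/(b-a)) * μ := by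
    rw [ProbabilityTheory.mgf]
    calc ∫ ω, Real.exp (t * X ω) ∂P
        ≤ ∫ ω, ((b*A - a*B)/(b-a) + ((B - A)/(b-a)) * X ω) ∂P := by
          refine integral_mono_ae hexpint hint2 ?_
          filter_upwards [hconv] with ω hω
          calc Real.exp (t * X ω) ≤ (b - X ω)/(b-a) * A + (X ω - a)/(b-a) * B := hω
            _ = (b*A - a*B)/(b-a) + ((B - A)/(b-a)) * X ω := by field_simp; ring
      _ = (b*A - a*B)/(b-a) + ((B - A)/(b-a)) * μ := by
          rw [integral_add (integrable_const _) (hXint.const_mul _), integral_const,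
            integral_const_mul]
          simp [hμ]
  have hcomb : (b*A - a*B)/(b-a) + ((B - A)/(b-a)) * μ = (1-p)*A + p*B := by
    rw [hp]; field_simp; ring
  -- Kearns-Saul bound on the two-point mgf
  set h := t*(b-a) with hh
  have hKD : (0:ℝ) < 1 - p + p * Real.exp h := by
    have h1 : (0:ℝ) < 1 - p := by linarith
    have := mul_pos hp0 (Real.exp_pos h)
    linarith
  have hstep2 : (1-p)*A + p*B = Real.exp (t*a + Real.log (1 - p + p*Real.exp h)) := by
    rw [Real.exp_add, Real.exp_log hKD, hA, hB]
    rw [show t*b = t*a + h by rw [hh]; ring, Real.exp_add]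
    ring
  have hstep3 : Real.log (1 - p + p*Real.exp h) ≤ p*h + Kconst p * h^2 := by
    have := KS_master hp0 hp1 h
    linarith
  have hμa : p * (b-a) = μ - a := by rw [hp]; field_simp
  have hfinal : t*a + (p*h + Kconst p * h^2) = t*μ + (Kconst p * (b-a)^2) * t^2 := by
    rw [hh]
    have : p * (t*(b-a)) = t * (μ - a) := by rw [← hμa]; ring
    nlinarith [this]
  calc ProbabilityTheory.mgf X P t ≤ (b*A - a*B)/(b-a) + ((B - A)/(b-a)) * μ := hstep1
    _ = (1-p)*A + p*B := hcomb
    _ = Real.exp (t*a + Real.log (1 - p + p*Real.exp h)) := hstep2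
    _ ≤ Real.exp (t*a + (p*h + Kconst p * h^2)) := by
        rw [Real.exp_le_exp]; linarith
    _ = Real.exp (t*μ + (Kconst p * (b-a)^2) * t^2) := by rw [hfinal]



/-- **Kearns–Saul inequality.** For independent real random variables `X_k ∈ [a_k, b_k]` a.s.,
with `p_k = (E[X_k] - a_k)/(b_k - a_k)` and constants `c_k` as below,
`P(Σ X_k - μ_n ≤ -α√n) ≤ exp(-α² n / (4 Σ c_k))` for every `α ≥ 0`. -/
theorem kearns_saul
    {Ω : Type*} {m0 : MeasurableSpace Ω} {P : Measure Ω} [IsProbabilityMeasure P]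
    (n : ℕ) (X : Fin n → Ω → ℝ) (hmeas : ∀ k, Measurable (X k))
    (hindep : ProbabilityTheory.iIndepFun X P)
    (a b : Fin n → ℝ) (hab : ∀ k, a k < b k)
    (hbdd : ∀ k, ∀ᵐ ω ∂P, X k ω ∈ Set.Icc (a k) (b k))
    (p : Fin n → ℝ) (hp : ∀ k, p k = ((∫ ω, X k ω ∂P) - a k) / (b k - a k))
    (hp0 : ∀ k, 0 < p k) (hp1 : ∀ k, p k < 1)
    (c : Fin n → ℝ)
    (hc : ∀ k, c k = if p k = 1 / 2 then (b k - a k) ^ 2 / 8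
      else (1 - 2 * p k) * (b k - a k) ^ 2 / (4 * Real.log ((1 - p k) / p k)))
    (α : ℝ) (hα : 0 ≤ α) :
    P {ω | ∑ k, X k ω - ∑ k, ∫ ω', X k ω' ∂P ≤ -α * Real.sqrt n} ≤
      ENNReal.ofReal (Real.exp (-(α ^ 2 * n) / (4 * ∑ k, c k))) := by
  classical
  have hck : ∀ k, c k = Kconst (p k) * (b k - a k)^2 := by
    intro k
    rw [hc k, Kconst]
    split_ifs with h <;> ring
  rcases Nat.eq_zero_or_pos n with hn | hn
  · subst hn
    have h1 : (Real.exp (-(α ^ 2 * (0:ℕ)) / (4 * ∑ k : Fin 0, c k))) = 1 := by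
      norm_num
    rw [h1, ENNReal.ofReal_one]
    exact prob_le_one
  -- main case
  have hcpos : ∀ k, 0 < c k := by
    intro k
    rw [hck k]
    exact mul_pos (Kconst_pos (hp0 k) (hp1 k)) (by nlinarith [hab k])
  set C := ∑ k, c k with hC
  have hCpos : 0 < C := Finset.sum_pos (fun k _ => hcpos k) ⟨⟨0, hn⟩, Finset.mem_univ _⟩
  set μtot := ∑ k, ∫ ω', X k ω' ∂P with hμtot
  set t0 := α * Real.sqrt n with ht0def
  have ht0 : 0 ≤ t0 := mul_nonneg hα (Real.sqrt_nonneg _)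
  set lam := t0/(2*C) with hlam
  have hlampos : 0 ≤ lam := div_nonneg ht0 (by linarith)
  set t : ℝ := -lam with ht
  have htneg : t ≤ 0 := by rw [ht]; linarith
  have hint : ∀ k, Integrable (fun ω => Real.exp (t * X k ω)) P :=
    fun k => integrable_exp_of_bdd (hmeas k) (hbdd k) t
  have hintsum : Integrable (fun ω => Real.exp (t * (∑ k, X k) ω)) P :=
    hindep.integrable_exp_mul_sum hmeas (fun k _ => hint k)
  have hset : {ω | ∑ k, X k ω - μtot ≤ -α * Real.sqrt n}
      = {ω | (∑ k, X k) ω ≤ μtot - t0} := by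
    ext ω
    simp only [Set.mem_setOf_eq, Finset.sum_apply, ht0def]
    constructor <;> intro h <;> linarith
  have hchern := ProbabilityTheory.measure_le_le_exp_mul_mgf (μ := P) (X := ∑ k, X k)
    (μtot - t0) htneg hintsum
  have hmgf : ProbabilityTheory.mgf (∑ k, X k) P t = ∏ k, ProbabilityTheory.mgf (X k) P t :=
    hindep.mgf_sum hmeas Finset.univ
  have hbnd : ∏ k, ProbabilityTheory.mgf (X k) P t
      ≤ ∏ k, Real.exp (t * (∫ ω, X k ω ∂P) + c k * t^2) := by
    refine Finset.prod_le_prod (fun k _ => ProbabilityTheory.mgf_nonneg) (fun k _ => ?_)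
    rw [hck k]
    exact mgf_le_KS (hmeas k) (hab k) (hbdd k) (hp k) (hp0 k) (hp1 k) t
  have hprod : ∏ k, Real.exp (t * (∫ ω, X k ω ∂P) + c k * t^2)
      = Real.exp (t * μtot + C * t^2) := by
    rw [← Real.exp_sum]
    congr 1
    rw [Finset.sum_add_distrib, ← Finset.mul_sum, ← Finset.sum_mul, hμtot, hC]
  have hkey : (P {ω | (∑ k, X k) ω ≤ μtot - t0}).toReal
      ≤ Real.exp (-(α ^ 2 * n) / (4 * C)) := by
    have h2 : Real.exp (-t * (μtot - t0)) * ProbabilityTheory.mgf (∑ k, X k) P t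
        ≤ Real.exp (-t * (μtot - t0)) * Real.exp (t * μtot + C * t^2) := by
      apply mul_le_mul_of_nonneg_left _ (Real.exp_pos _).le
      rw [hmgf]
      exact le_trans hbnd (le_of_eq hprod)
    have h3 : Real.exp (-t * (μtot - t0)) * Real.exp (t * μtot + C * t^2)
        = Real.exp (-(α ^ 2 * n) / (4 * C)) := by
      rw [← Real.exp_add]
      congr 1
      have ht0sq : t0^2 = α^2 * n := by
        rw [ht0def, mul_pow, Real.sq_sqrt (Nat.cast_nonneg n)]
      have hexp : -t * (μtot - t0) + (t * μtot + C * t^2) = -(t0^2)/(4*C) := by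
        rw [ht, hlam]
        field_simp
        ring
      rw [hexp, ht0sq]
    calc (P {ω | (∑ k, X k) ω ≤ μtot - t0}).toReal
        ≤ Real.exp (-t * (μtot - t0)) * ProbabilityTheory.mgf (∑ k, X k) P t := hchern
      _ ≤ Real.exp (-(α ^ 2 * n) / (4 * C)) := by rw [← h3]; exact h2
  rw [hset]
  calc P {ω | (∑ k, X k) ω ≤ μtot - t0}
      = ENNReal.ofReal (P {ω | (∑ k, X k) ω ≤ μtot - t0}).toReal :=
        (ENNReal.ofReal_toReal (measure_ne_top _ _)).symm
    _ ≤ ENNReal.ofReal (Real.exp (-(α ^ 2 * n) / (4 * C))) := ENNReal.ofReal_le_ofReal hkey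

end KSAux
end QHT
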